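/- arXiv:2407.04945 — 6 statements merged into one kernel-verified Lean document; each statement's English description precedes it below -/
import Mathlib

section
/- Let θ ∈ ℝ, r > 0, α ∈ (0,1), and let q be an odd positive integer with q ≥ 8·log(1/α). Let T_1,…,T_q be independent real random variables such that P(|T_i − θ| ≤ r) ≥ 3/4 for each i. Then the median T_med of T_1,…,T_q satisfies P(|T_med − θ| ≤ r) ≥ 1 − α. -/
open MeasureTheory ProbabilityTheory Finset Real

lemma sorted_median_mem {θ r : ℝ} {l : List ℝ} (hl : l.Pairwise (· ≤ ·)) {k : ℕ}
    (hk : k < l.length) (hlen : l.length ≤ 2 * k + 1)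
    (hc : k < l.countP (fun x => decide (|x - θ| ≤ r))) :
    |l.getD k 0 - θ| ≤ r := by
  set p : ℝ → Bool := fun x => decide (|x - θ| ≤ r) with hp
  rw [List.getD_eq_getElem l 0 hk]
  rw [abs_le]
  constructor
  · -- lower bound: -r ≤ l[k] - θ
    by_contra hx
    push_neg at hx
    have hsplit : l.countP p = (l.take (k+1)).countP p + (l.drop (k+1)).countP p := by
      rw [← List.countP_append, List.take_append_drop]
    have h1 : (l.take (k+1)).countP p = 0 := by
      rw [List.countP_eq_zero]
      intro x hx'
      obtain ⟨j, hj, rfl⟩ := List.mem_iff_getElem.mp hx'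
      have hjlen : j < l.length := by rw [List.length_take] at hj; omega
      have hjk : j ≤ k := by rw [List.length_take] at hj; omega
      rw [List.getElem_take]
      have hle : l[j] ≤ l[k] := by
        rcases eq_or_lt_of_le hjk with h | h
        · subst h; rfl
        · simpa using (hl.rel_get_of_lt (a := ⟨j, hjlen⟩) (b := ⟨k, hk⟩) (Fin.mk_lt_mk.mpr h))
      simp only [hp, decide_eq_true_eq, abs_le, not_and, not_le]
      intro h1
      linarith
    have h2 : (l.drop (k+1)).countP p ≤ l.length - (k+1) := by
      calc (l.drop (k+1)).countP p ≤ (l.drop (k+1)).length := List.countP_le_length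
        _ = l.length - (k+1) := List.length_drop
    omega
  · -- upper bound
    by_contra hx
    push_neg at hx
    have hsplit : l.countP p = (l.take k).countP p + (l.drop k).countP p := by
      rw [← List.countP_append, List.take_append_drop]
    have h2 : (l.drop k).countP p = 0 := by
      rw [List.countP_eq_zero]
      intro x hx'
      obtain ⟨j, hj, rfl⟩ := List.mem_iff_getElem.mp hx'
      have hkj : k + j < l.length := by rw [List.length_drop] at hj; omega
      rw [List.getElem_drop]
      have hge : l[k] ≤ l[k + j] := by
        rcases Nat.eq_or_lt_of_le (Nat.le_add_right k j) with h | h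
        · simp [← h]
        · simpa using (hl.rel_get_of_lt (a := ⟨k, hk⟩) (b := ⟨k + j, hkj⟩) (Fin.mk_lt_mk.mpr h))
      simp only [hp, decide_eq_true_eq, abs_le, not_and, not_le]
      intro h1
      linarith
    have h1 : (l.take k).countP p ≤ k := by
      calc (l.take k).countP p ≤ (l.take k).length := List.countP_le_length
        _ ≤ k := List.length_take_le _ _
    omega

lemma countP_sort_eq_card {q : ℕ} (f : Fin q → ℝ) (θ r : ℝ) :
    ((Finset.univ.val.map f).sort (· ≤ ·)).countP (fun x => decide (|x - θ| ≤ r))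
      = (Finset.univ.filter (fun i => |f i - θ| ≤ r)).card := by
  have h1 : ((Finset.univ.val.map f).sort (· ≤ ·) : Multiset ℝ) = Finset.univ.val.map f :=
    Multiset.sort_eq _ _
  rw [← Multiset.coe_countP, h1, Multiset.countP_map]
  rfl

/-- Median boosting: if `T_1,…,T_q` are independent estimators, each
within `r` of `θ` with probability at least `3/4`, and `q` is odd with
`q ≥ 8 log(1/α)`, then their median is within `r` of `θ` with probability at
least `1 − α`. -/
theorem median_boosting
    {Ω : Type*} [MeasureSpace Ω] [IsProbabilityMeasure (ℙ : Measure Ω)]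
    (θ r α : ℝ) (hr : 0 < r) (hα : α ∈ Set.Ioo (0 : ℝ) 1)
    {q : ℕ} (hq0 : 0 < q) (hodd : Odd q) (hq : 8 * Real.log (1 / α) ≤ q)
    (T : Fin q → Ω → ℝ) (hmeas : ∀ i, Measurable (T i))
    (hindep : iIndepFun T ℙ)
    (hgood : ∀ i, (3 / 4 : ENNReal) ≤ ℙ {ω | |T i ω - θ| ≤ r})
    (Tmed : Ω → ℝ)
    (hmed : ∀ ω, Tmed ω =
      (((Finset.univ : Finset (Fin q)).val.map (fun i => T i ω)).sort (· ≤ ·)).getD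
        ((q + 1) / 2 - 1) 0) :
    ENNReal.ofReal (1 - α) ≤ ℙ {ω | |Tmed ω - θ| ≤ r} := by
  obtain ⟨hα0, hα1⟩ := hα
  obtain ⟨c, hc⟩ := hodd
  -- the bad indicator
  set f : ℝ → ℝ := fun x => if |x - θ| ≤ r then 0 else 1 with hf
  have hfmeas : Measurable f := by
    apply Measurable.ite ?_ measurable_const measurable_const
    exact measurableSet_le (measurable_id.sub_const θ).abs measurable_const
  set X : Fin q → Ω → ℝ := fun i => f ∘ T i with hX
  have hXmeas : ∀ i, Measurable (X i) := fun i => hfmeas.comp (hmeas i)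
  have hXindep : iIndepFun X ℙ :=
    hindep.comp _ (fun _ => hfmeas)
  set t := Real.log 3 with ht
  have ht0 : 0 ≤ t := Real.log_nonneg (by norm_num)
  have hA : ∀ i, MeasurableSet {ω | |T i ω - θ| ≤ r} := fun i =>
    measurableSet_le ((hmeas i).sub_const θ).abs measurable_const
  have hexp : ∀ i, (fun ω => Real.exp (t * X i ω)) =
      fun ω => 1 + ({ω | |T i ω - θ| ≤ r}ᶜ).indicator (fun _ => (2:ℝ)) ω := by
    intro i; funext ω
    by_cases h : |T i ω - θ| ≤ r
    · have : ω ∉ {ω | |T i ω - θ| ≤ r}ᶜ := by simp [h]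
      simp [hX, hf, h, Set.indicator_of_notMem this]
    · have : ω ∈ {ω | |T i ω - θ| ≤ r}ᶜ := by simp [h]
      simp only [hX, hf, Function.comp_apply, if_neg h, mul_one,
        Set.indicator_of_mem this]
      rw [ht, Real.exp_log (by norm_num)]
      norm_num
  have hint : ∀ i, Integrable (fun ω => Real.exp (t * X i ω)) ℙ := by
    intro i; rw [hexp i]
    exact (integrable_const 1).add ((integrable_const 2).indicator (hA i).compl)
  have hmgf : ∀ i, mgf (X i) ℙ t ≤ 3/2 := by
    intro i
    have hcompl : ℙ ({ω | |T i ω - θ| ≤ r}ᶜ) ≤ 1/4 := by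
      rw [measure_compl (hA i) (measure_ne_top _ _), measure_univ]
      calc (1 : ENNReal) - ℙ {ω | |T i ω - θ| ≤ r} ≤ 1 - 3/4 :=
            tsub_le_tsub_left (hgood i) 1
        _ = 1/4 := by
            rw [ENNReal.sub_eq_of_eq_add (by simp [ENNReal.div_eq_top])]
            rw [ENNReal.div_add_div_same]
            norm_num
            exact (ENNReal.div_self (by norm_num) (by norm_num)).symm
    have hcr : (ℙ ({ω | |T i ω - θ| ≤ r}ᶜ)).toReal ≤ 1/4 := by
      have := ENNReal.toReal_mono (by norm_num) hcompl
      simpa using this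
    have : mgf (X i) ℙ t = 1 + 2 * (ℙ ({ω | |T i ω - θ| ≤ r}ᶜ)).toReal := by
      rw [mgf, hexp i, integral_add (integrable_const 1)
        ((integrable_const 2).indicator (hA i).compl), integral_const,
        integral_indicator_const _ (hA i).compl]
      simp [mul_comm]
      rfl
    rw [this]
    linarith
  -- Chernoff bound
  set S : Ω → ℝ := ∑ i, X i with hS
  have hSmeas : Measurable S := by
    rw [hS, Finset.sum_fn]
    exact Finset.measurable_sum _ (fun i _ => hXmeas i)
  have hSint : Integrable (fun ω => Real.exp (t * S ω)) ℙ :=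
    hXindep.integrable_exp_mul_sum hXmeas (fun i _ => hint i)
  have hcher := measure_ge_le_exp_mul_mgf (μ := ℙ) (X := S) ((q:ℝ)/2) ht0 hSint
  have hmgfS : mgf S ℙ t ≤ (3/2)^q := by
    rw [hS, hXindep.mgf_sum hXmeas]
    calc ∏ i, mgf (X i) ℙ t ≤ ∏ _i : Fin q, (3/2:ℝ) :=
          Finset.prod_le_prod (fun i _ => mgf_nonneg) (fun i _ => hmgf i)
      _ = (3/2)^q := by simp [div_pow]
  have hnum : Real.exp (-t * ((q:ℝ)/2)) * (3/2)^q ≤ α := by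
    have h32 : ((3:ℝ)/2)^q = Real.exp ((q:ℝ) * Real.log (3/2)) := by
      rw [Real.exp_nat_mul, Real.exp_log (by norm_num : (0:ℝ) < 3/2)]
    rw [h32, ← Real.exp_add]
    rw [show α = Real.exp (Real.log α) from (Real.exp_log hα0).symm]
    apply Real.exp_le_exp.mpr
    have hlogα : -(q:ℝ)/8 ≤ Real.log α := by
      rw [one_div, Real.log_inv] at hq
      linarith
    have hl32 : Real.log (3/2) = Real.log 3 - Real.log 2 :=
      Real.log_div (by norm_num) (by norm_num)
    have hl34 : Real.log 3 - 2 * Real.log 2 ≤ -1/4 := by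
      have h1 : Real.log (3/4) ≤ 3/4 - 1 := Real.log_le_sub_one_of_pos (by norm_num)
      have h2 : Real.log (3/4) = Real.log 3 - Real.log 4 :=
        Real.log_div (by norm_num) (by norm_num)
      have h3 : Real.log 4 = 2 * Real.log 2 := by
        rw [show (4:ℝ) = 2^2 by norm_num, Real.log_pow]
        push_cast; ring
      rw [h2, h3] at h1
      linarith
    have hqnn : (0:ℝ) ≤ (q:ℝ) := Nat.cast_nonneg q
    rw [hl32, ht]
    nlinarith
  set B : Set Ω := {ω | (q:ℝ)/2 ≤ S ω} with hB
  have hBmeas : MeasurableSet B := measurableSet_le measurable_const hSmeas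
  have hPB : ℙ B ≤ ENNReal.ofReal α := by
    rw [ENNReal.le_ofReal_iff_toReal_le (measure_ne_top _ _) hα0.le]
    exact hcher.trans (by
      calc Real.exp (-t * ((q:ℝ)/2)) * mgf S ℙ t
          ≤ Real.exp (-t * ((q:ℝ)/2)) * (3/2)^q := by
            apply mul_le_mul_of_nonneg_left hmgfS (Real.exp_nonneg _)
        _ ≤ α := hnum)
  -- deterministic part: on Bᶜ the median is within r of θ
  have hBc : Bᶜ ⊆ {ω | |Tmed ω - θ| ≤ r} := by
    intro ω hω
    simp only [hB, Set.mem_compl_iff, Set.mem_setOf_eq, not_le] at hω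
    have hSω : S ω = ((Finset.univ.filter (fun i => ¬ |T i ω - θ| ≤ r)).card : ℝ) := by
      rw [hS, Finset.sum_apply, Finset.card_filter]
      push_cast
      apply Finset.sum_congr rfl
      intro i _
      by_cases h : |T i ω - θ| ≤ r <;> simp [hX, hf, h]
    have hsum : (Finset.univ.filter (fun i => |T i ω - θ| ≤ r)).card
        + (Finset.univ.filter (fun i => ¬ |T i ω - θ| ≤ r)).card = q := by
      rw [Finset.card_filter_add_card_filter_not]
      simp
    have hbad : (Finset.univ.filter (fun i => ¬ |T i ω - θ| ≤ r)).card ≤ c := by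
      rw [hSω] at hω
      have h2 : 2 * (Finset.univ.filter (fun i => ¬ |T i ω - θ| ≤ r)).card < q := by
        exact_mod_cast (by linarith :
          (2:ℝ) * (Finset.univ.filter (fun i => ¬ |T i ω - θ| ≤ r)).card < (q:ℝ))
      omega
    have hgoodc : c < (Finset.univ.filter (fun i => |T i ω - θ| ≤ r)).card := by omega
    rw [Set.mem_setOf_eq, hmed ω]
    have hidx : (q+1)/2 - 1 = c := by omega
    rw [hidx]
    have hlen : ((Finset.univ.val.map (fun i => T i ω)).sort (· ≤ ·)).length = q := by
      rw [Multiset.length_sort, Multiset.card_map]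
      simp
    apply sorted_median_mem (Multiset.pairwise_sort _ _)
    · omega
    · omega
    · rw [countP_sort_eq_card]
      exact hgoodc
  -- assemble
  have key : ENNReal.ofReal (1 - α) ≤ 1 - ENNReal.ofReal α := by
    apply ENNReal.le_sub_of_add_le_right ENNReal.ofReal_ne_top
    rw [← ENNReal.ofReal_add (by linarith) hα0.le]
    simp
  calc ENNReal.ofReal (1 - α) ≤ 1 - ENNReal.ofReal α := key
    _ ≤ 1 - ℙ B := tsub_le_tsub_left hPB 1
    _ = ℙ Bᶜ := by rw [measure_compl hBmeas (measure_ne_top _ _), measure_univ]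
    _ ≤ ℙ {ω | |Tmed ω - θ| ≤ r} := measure_mono hBc
end

section
/- Let S_1,…,S_M be i.i.d. uniformly random k-element subsets of [n], independent of X_1,…,X_n, and let θ̂_ss = (1/M)·Σ_{j=1}^{M} h(X_{S_j}). Then Var(θ̂_ss) = (1 − 1/M)·Var(U_n) + ζ_k/M, where ζ_k = Var(h(X_1,…,X_k)). -/
open MeasureTheory ProbabilityTheory Finset

instance Finset.instMeasurableSpaceOfDiscrete (α : Type*) : MeasurableSpace (Finset α) := ⊤

section Aux

variable {Ω 𝒳 : Type*} [MeasureSpace Ω] [IsProbabilityMeasure (ℙ : Measure Ω)]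
  [MeasurableSpace 𝒳]

private lemma aux_integrable_mul {f g : Ω → ℝ} (hf : MemLp f 2 ℙ) (hg : MemLp g 2 ℙ) :
    Integrable (fun ω => f ω * g ω) ℙ := by
  have h := hg.smul (φ := f) hf (r := 1) (hpqr := ⟨by simp [ENNReal.inv_two_add_inv_two]⟩)
  rw [← memLp_one_iff_integrable]
  exact h

private lemma aux_map_pi {n k : ℕ}
    (X : Fin n → Ω → 𝒳) (hXmeas : ∀ i, Measurable (X i))
    (hindep : iIndepFun X ℙ)
    (hident : ∀ i j, IdentDistrib (X i) (X j) ℙ ℙ)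
    (hk' : 0 < k) (i0 : Fin n) (f : Fin k → Fin n) (hf : Function.Injective f) :
    Measure.map (fun ω (i : Fin k) => X (f i) ω) ℙ
      = Measure.pi (fun _ : Fin k => Measure.map (X i0) ℙ) := by
  have : Nonempty (Fin k) := ⟨⟨0, hk'⟩⟩
  have hP : IsProbabilityMeasure (Measure.map (X i0) ℙ) :=
    Measure.isProbabilityMeasure_map (hXmeas i0).aemeasurable
  refine (Measure.pi_eq fun s hs => ?_).symm
  have htup : Measurable (fun ω (i : Fin k) => X (f i) ω) :=
    measurable_pi_lambda _ fun i => hXmeas (f i)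
  rw [Measure.map_apply htup (MeasurableSet.univ_pi hs)]
  have hpre : (fun ω (i : Fin k) => X (f i) ω) ⁻¹' Set.univ.pi s
      = ⋂ j ∈ Finset.image f Finset.univ, X j ⁻¹' (s (Function.invFun f j)) := by
    ext ω
    simp only [Set.mem_preimage, Set.mem_pi, Set.mem_univ, forall_true_left, Set.mem_iInter,
      Finset.mem_image, Finset.mem_univ, true_and]
    constructor
    · rintro hx j ⟨i, rfl⟩
      rw [Function.leftInverse_invFun hf i]
      exact hx i
    · intro hx i
      have := hx (f i) ⟨i, rfl⟩
      rwa [Function.leftInverse_invFun hf i] at this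
  have hsets : ∀ j ∈ Finset.image f Finset.univ,
      MeasurableSet (s (Function.invFun f j)) := by
    intro j hj
    obtain ⟨i, -, rfl⟩ := Finset.mem_image.mp hj
    rw [Function.leftInverse_invFun hf i]
    exact hs i
  rw [hpre, hindep.measure_inter_preimage_eq_mul (Finset.image f Finset.univ)
      (sets := fun j => s (Function.invFun f j)) hsets,
    Finset.prod_image (fun a _ b _ hab => hf hab)]
  refine Finset.prod_congr rfl fun i _ => ?_
  rw [Function.leftInverse_invFun hf i, ← Measure.map_apply (hXmeas (f i)) (hs i),
    (hident (f i) i0).map_eq]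

private lemma aux_identDistrib_tuple {n k : ℕ}
    (X : Fin n → Ω → 𝒳) (hXmeas : ∀ i, Measurable (X i))
    (hindep : iIndepFun X ℙ)
    (hident : ∀ i j, IdentDistrib (X i) (X j) ℙ ℙ)
    (hk' : 0 < k) (f g : Fin k → Fin n)
    (hf : Function.Injective f) (hg : Function.Injective g) :
    IdentDistrib (fun ω (i : Fin k) => X (f i) ω) (fun ω (i : Fin k) => X (g i) ω) ℙ ℙ := by
  refine ⟨(measurable_pi_lambda _ fun i => hXmeas (f i)).aemeasurable,
    (measurable_pi_lambda _ fun i => hXmeas (g i)).aemeasurable, ?_⟩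
  rw [aux_map_pi X hXmeas hindep hident hk' (f ⟨0, hk'⟩) f hf,
    aux_map_pi X hXmeas hindep hident hk' (f ⟨0, hk'⟩) g hg]

end Aux

private noncomputable def auxPsi {𝒳 : Type*} (k : ℕ) {n : ℕ} (h : (Fin k → 𝒳) → ℝ)
    (t : Finset (Fin n)) (v : Fin n → 𝒳) : ℝ :=
  if ht : t.card = k then h (fun i => v (↑(t.orderIsoOfFin ht i))) else 0

private lemma auxPsi_measurable {𝒳 : Type*} [MeasurableSpace 𝒳] (k : ℕ) {n : ℕ}
    {h : (Fin k → 𝒳) → ℝ} (hmeas : Measurable h) (t : Finset (Fin n)) :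
    Measurable (auxPsi k h t) := by
  unfold auxPsi
  by_cases ht : t.card = k
  · simp only [dif_pos ht]
    exact hmeas.comp (measurable_pi_lambda _ fun i => measurable_pi_apply _)
  · simp only [dif_neg ht]
    exact measurable_const

/-- Variance of the subsampled U-statistic estimator:
if `S_1,…,S_M` are i.i.d. uniform `k`-subsets of `[n]`, independent of the data, then
`Var(θ̂_ss) = (1 − 1/M)·Var(U_n) + ζ_k/M`. -/
theorem subsampled_ustat_variance
    {Ω 𝒳 : Type*} [MeasureSpace Ω] [IsProbabilityMeasure (ℙ : Measure Ω)]
    [MeasurableSpace 𝒳]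
    {n k : ℕ} (hk : 1 ≤ k) (hkn : k ≤ n)
    (X : Fin n → Ω → 𝒳) (hXmeas : ∀ i, Measurable (X i))
    (hindep : iIndepFun X ℙ)
    (hident : ∀ i j, IdentDistrib (X i) (X j) ℙ ℙ)
    (h : (Fin k → 𝒳) → ℝ) (hmeas : Measurable h)
    (hsymm : ∀ (σ : Equiv.Perm (Fin k)) (y : Fin k → 𝒳), h (y ∘ σ) = h y)
    (hL2 : MemLp (fun ω => h (fun i => X (Fin.castLE hkn i) ω)) 2 ℙ)
    (ζk : ℝ) (hζk : ζk = variance (fun ω => h (fun i => X (Fin.castLE hkn i) ω)) ℙ)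
    {M : ℕ} (hM : 1 ≤ M)
    (S : Fin M → Ω → Finset (Fin n)) (hSmeas : ∀ j, Measurable (S j))
    (hScard : ∀ j ω, (S j ω).card = k)
    (hSunif : ∀ j, ∀ s : Finset (Fin n), s.card = k →
      ℙ {ω | S j ω = s} = ((n.choose k : ENNReal))⁻¹)
    (hSindep : iIndepFun S ℙ)
    (hSX : IndepFun (fun ω j => S j ω) (fun ω i => X i ω) ℙ)
    (U : Ω → ℝ)
    (hU : ∀ ω, U ω = (n.choose k : ℝ)⁻¹ *
      ∑ T ∈ (Finset.powersetCard k (Finset.univ : Finset (Fin n))).attach,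
        h (fun j => X (↑(T.1.orderIsoOfFin (Finset.mem_powersetCard.mp T.2).2 j)) ω))
    (θhat : Ω → ℝ)
    (hθhat : ∀ ω, θhat ω = (M : ℝ)⁻¹ *
      ∑ j : Fin M, h (fun i => X (↑((S j ω).orderIsoOfFin (hScard j ω) i)) ω)) :
    variance θhat ℙ = (1 - 1 / (M : ℝ)) * variance U ℙ + ζk / M := by
  classical
  have hk0 : 0 < k := hk
  have hNpos : 0 < n.choose k := Nat.choose_pos hkn
  have hNne : ((n.choose k : ℝ)) ≠ 0 := Nat.cast_ne_zero.mpr hNpos.ne'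
  have hMne : ((M : ℝ)) ≠ 0 := Nat.cast_ne_zero.mpr (Nat.one_le_iff_ne_zero.mp hM)
  set m1 : ℝ := ∫ ω, h (fun i => X (Fin.castLE hkn i) ω) with hm1def
  set m2 : ℝ := ∫ ω, (h (fun i => X (Fin.castLE hkn i) ω)) ^ 2 with hm2def
  -- the card fact for members of the powerset
  have hTcard : ∀ T : {x // x ∈ Finset.powersetCard k (Finset.univ : Finset (Fin n))},
      (↑T : Finset (Fin n)).card = k := fun T => (Finset.mem_powersetCard.mp T.2).2
  have hcardT : (Finset.powersetCard k (Finset.univ : Finset (Fin n))).attach.card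
      = n.choose k := by
    rw [Finset.card_attach, Finset.card_powersetCard, Finset.card_univ, Fintype.card_fin]
  -- measurability of the kernels
  have hGmeas : ∀ t : Finset (Fin n), Measurable (fun ω => auxPsi k h t (fun i => X i ω)) :=
    fun t => (auxPsi_measurable k hmeas t).comp (measurable_pi_lambda _ fun i => hXmeas i)
  -- identical distribution
  have hID : ∀ (t : Finset (Fin n)), t.card = k →
      IdentDistrib (fun ω => auxPsi k h t (fun i => X i ω))
        (fun ω => h (fun i => X (Fin.castLE hkn i) ω)) ℙ ℙ := by
    intro t ht
    have he : (fun ω => auxPsi k h t (fun i => X i ω))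
        = fun ω => h (fun i => X (↑(t.orderIsoOfFin ht i)) ω) := by
      funext ω; unfold auxPsi; rw [dif_pos ht]
    rw [he]
    have hinj1 : Function.Injective (fun i : Fin k => (↑(t.orderIsoOfFin ht i) : Fin n)) :=
      fun a b hab => (t.orderIsoOfFin ht).injective (Subtype.ext hab)
    have hinj2 : Function.Injective (Fin.castLE hkn) := Fin.castLE_injective hkn
    exact (aux_identDistrib_tuple X hXmeas hindep hident hk0 _ _ hinj1 hinj2).comp hmeas
  have hGL2 : ∀ (t : Finset (Fin n)), t.card = k →
      MemLp (fun ω => auxPsi k h t (fun i => X i ω)) 2 ℙ :=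
    fun t ht => (hID t ht).symm.memLp_snd hL2
  have hGint : ∀ (t : Finset (Fin n)), t.card = k →
      Integrable (fun ω => auxPsi k h t (fun i => X i ω)) ℙ :=
    fun t ht => (hGL2 t ht).integrable one_le_two
  have hGsqint : ∀ (t : Finset (Fin n)), t.card = k →
      Integrable (fun ω => (auxPsi k h t (fun i => X i ω)) ^ 2) ℙ :=
    fun t ht => (hGL2 t ht).integrable_sq
  have hEG1 : ∀ (t : Finset (Fin n)), t.card = k →
      ∫ ω, auxPsi k h t (fun i => X i ω) = m1 :=
    fun t ht => (hID t ht).integral_eq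
  have hEG2 : ∀ (t : Finset (Fin n)), t.card = k →
      ∫ ω, (auxPsi k h t (fun i => X i ω)) ^ 2 = m2 :=
    fun t ht => ((hID t ht).comp (measurable_id.pow_const 2)).integral_eq
  -- indicator facts
  have hAmeas : ∀ (j : Fin M) (t : Finset (Fin n)), MeasurableSet {ω | S j ω = t} :=
    fun j t => hSmeas j (MeasurableSpace.measurableSet_top
      (s := ({t} : Set (Finset (Fin n)))))
  have hindEq : ∀ (j : Fin M) (t : Finset (Fin n)) (ω : Ω),
      (if S j ω = t then (1:ℝ) else 0)
        = Set.indicator {ω' | S j ω' = t} (1 : Ω → ℝ) ω := by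
    intro j t ω
    by_cases hc : S j ω = t <;> simp [Set.indicator_apply, Set.mem_setOf_eq, hc]
  have hindint : ∀ (j : Fin M) (t : Finset (Fin n)),
      Integrable (fun ω => if S j ω = t then (1:ℝ) else 0) ℙ := by
    intro j t
    rw [show (fun ω => if S j ω = t then (1:ℝ) else 0)
      = Set.indicator {ω' | S j ω' = t} (1 : Ω → ℝ) from funext (hindEq j t)]
    exact (integrable_const (1:ℝ)).indicator (hAmeas j t)
  have hEind : ∀ (j : Fin M) (t : Finset (Fin n)), t.card = k →
      ∫ ω, (if S j ω = t then (1:ℝ) else 0) = (n.choose k : ℝ)⁻¹ := by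
    intro j t ht
    simp only [hindEq j t]
    rw [integral_indicator_one (hAmeas j t), measureReal_def, hSunif j t ht]
    simp
  have hpairEq : ∀ (j j' : Fin M) (t t' : Finset (Fin n)) (ω : Ω),
      (if S j ω = t then (1:ℝ) else 0) * (if S j' ω = t' then (1:ℝ) else 0)
        = Set.indicator ({ω' | S j ω' = t} ∩ {ω' | S j' ω' = t'}) (1 : Ω → ℝ) ω := by
    intro j j' t t' ω
    by_cases h1 : S j ω = t <;> by_cases h2 : S j' ω = t' <;>
      simp [Set.indicator_apply, Set.mem_setOf_eq, h1, h2]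
  have hpairint : ∀ (j j' : Fin M) (t t' : Finset (Fin n)),
      Integrable (fun ω =>
        (if S j ω = t then (1:ℝ) else 0) * (if S j' ω = t' then (1:ℝ) else 0)) ℙ := by
    intro j j' t t'
    rw [show (fun ω => (if S j ω = t then (1:ℝ) else 0) * (if S j' ω = t' then (1:ℝ) else 0))
      = Set.indicator ({ω' | S j ω' = t} ∩ {ω' | S j' ω' = t'}) (1 : Ω → ℝ)
      from funext (hpairEq j j' t t')]
    exact (integrable_const (1:ℝ)).indicator ((hAmeas j t).inter (hAmeas j' t'))
  have hEpair : ∀ (j j' : Fin M), j ≠ j' → ∀ (t t' : Finset (Fin n)),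
      t.card = k → t'.card = k →
      ∫ ω, (if S j ω = t then (1:ℝ) else 0) * (if S j' ω = t' then (1:ℝ) else 0)
        = (n.choose k : ℝ)⁻¹ * (n.choose k : ℝ)⁻¹ := by
    intro j j' hjj' t t' ht ht'
    simp only [hpairEq j j' t t']
    rw [integral_indicator_one ((hAmeas j t).inter (hAmeas j' t')), measureReal_def]
    have hmul := (hSindep.indepFun hjj').measure_inter_preimage_eq_mul
      (s := ({t} : Set (Finset (Fin n)))) (t := ({t'} : Set (Finset (Fin n))))
      MeasurableSpace.measurableSet_top MeasurableSpace.measurableSet_top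
    rw [show ({ω | S j ω = t} ∩ {ω | S j' ω = t'} : Set Ω)
        = S j ⁻¹' {t} ∩ S j' ⁻¹' {t'} from rfl, hmul,
      show (S j ⁻¹' {t} : Set Ω) = {ω | S j ω = t} from rfl,
      show (S j' ⁻¹' {t'} : Set Ω) = {ω | S j' ω = t'} from rfl,
      hSunif j t ht, hSunif j' t' ht', ENNReal.toReal_mul]
    simp
  -- independence factorizations
  have hset : ∀ (j : Fin M) (t : Finset (Fin n)),
      MeasurableSet {v : Fin M → Finset (Fin n) | v j = t} := by
    intro j t
    have he : {v : Fin M → Finset (Fin n) | v j = t}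
        = (fun v : Fin M → Finset (Fin n) => v j) ⁻¹' {t} := rfl
    rw [he]
    exact measurable_pi_apply j MeasurableSpace.measurableSet_top
  have hfacG : ∀ (j : Fin M) (t : Finset (Fin n)) (G : (Fin n → 𝒳) → ℝ), Measurable G →
      Integrable (fun ω => G (fun i => X i ω)) ℙ →
      ∫ ω, (if S j ω = t then (1:ℝ) else 0) * G (fun i => X i ω)
        = (∫ ω, (if S j ω = t then (1:ℝ) else 0)) * ∫ ω, G (fun i => X i ω) := by
    intro j t G hG hGi
    have hφ : Measurable (fun v : Fin M → Finset (Fin n) => if v j = t then (1:ℝ) else 0) :=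
      Measurable.ite (hset j t) measurable_const measurable_const
    have hIF : IndepFun (fun ω => if S j ω = t then (1:ℝ) else 0)
        (fun ω => G (fun i => X i ω)) ℙ := hSX.comp hφ hG
    exact hIF.integral_fun_mul_eq_mul_integral (hindint j t).aestronglyMeasurable hGi.aestronglyMeasurable
  have hfacPair : ∀ (j j' : Fin M) (t t' : Finset (Fin n)) (G : (Fin n → 𝒳) → ℝ),
      Measurable G → Integrable (fun ω => G (fun i => X i ω)) ℙ →
      ∫ ω, ((if S j ω = t then (1:ℝ) else 0) * (if S j' ω = t' then (1:ℝ) else 0))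
          * G (fun i => X i ω)
        = (∫ ω, (if S j ω = t then (1:ℝ) else 0) * (if S j' ω = t' then (1:ℝ) else 0))
          * ∫ ω, G (fun i => X i ω) := by
    intro j j' t t' G hG hGi
    have hφ : Measurable (fun v : Fin M → Finset (Fin n) =>
        (if v j = t then (1:ℝ) else 0) * (if v j' = t' then (1:ℝ) else 0)) :=
      (Measurable.ite (hset j t) measurable_const measurable_const).mul
      (Measurable.ite (hset j' t') measurable_const measurable_const)
    have hIF : IndepFun (fun ω =>
        (if S j ω = t then (1:ℝ) else 0) * (if S j' ω = t' then (1:ℝ) else 0))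
        (fun ω => G (fun i => X i ω)) ℙ := hSX.comp hφ hG
    exact hIF.integral_fun_mul_eq_mul_integral (hpairint j j' t t').aestronglyMeasurable
      hGi.aestronglyMeasurable
  -- selection identity
  have hpick : ∀ (j : Fin M) (ω : Ω) (c : Finset (Fin n) → ℝ),
      (∑ T ∈ (Finset.powersetCard k (Finset.univ : Finset (Fin n))).attach,
        (if S j ω = ↑T then (1:ℝ) else 0) * c ↑T) = c (S j ω) := by
    intro j ω c
    have hmem : S j ω ∈ Finset.powersetCard k (Finset.univ : Finset (Fin n)) :=
      Finset.mem_powersetCard_univ.mpr (hScard j ω)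
    rw [Finset.sum_eq_single_of_mem ⟨S j ω, hmem⟩ (Finset.mem_attach _ _)]
    · simp
    · intro b _ hb
      rw [if_neg, zero_mul]
      intro hEq; exact hb (Subtype.ext hEq.symm)
  -- rewriting U and θhat
  have hUeq : ∀ ω, U ω = (n.choose k : ℝ)⁻¹ *
      ∑ T ∈ (Finset.powersetCard k (Finset.univ : Finset (Fin n))).attach,
        auxPsi k h ↑T (fun i => X i ω) := by
    intro ω; rw [hU ω]; congr 1
    refine Finset.sum_congr rfl fun T _ => ?_
    unfold auxPsi; rw [dif_pos (hTcard T)]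
  have hθeq : ∀ ω, θhat ω = (M : ℝ)⁻¹ *
      ∑ j : Fin M, auxPsi k h (S j ω) (fun i => X i ω) := by
    intro ω; rw [hθhat ω]; congr 1
    refine Finset.sum_congr rfl fun j _ => ?_
    unfold auxPsi; rw [dif_pos (hScard j ω)]
  have hYexp : ∀ (j : Fin M) (ω : Ω), auxPsi k h (S j ω) (fun i => X i ω)
      = ∑ T ∈ (Finset.powersetCard k (Finset.univ : Finset (Fin n))).attach,
        (if S j ω = ↑T then (1:ℝ) else 0) * auxPsi k h ↑T (fun i => X i ω) :=
    fun j ω => (hpick j ω (fun t => auxPsi k h t (fun i => X i ω))).symm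
  have hYsqexp : ∀ (j : Fin M) (ω : Ω), (auxPsi k h (S j ω) (fun i => X i ω)) ^ 2
      = ∑ T ∈ (Finset.powersetCard k (Finset.univ : Finset (Fin n))).attach,
        (if S j ω = ↑T then (1:ℝ) else 0) * (auxPsi k h ↑T (fun i => X i ω)) ^ 2 :=
    fun j ω => (hpick j ω (fun t => (auxPsi k h t (fun i => X i ω)) ^ 2)).symm
  -- term-level facts
  have htermEq : ∀ (j : Fin M) (t : Finset (Fin n)) (f : Ω → ℝ),
      (fun ω => (if S j ω = t then (1:ℝ) else 0) * f ω)
        = Set.indicator {ω | S j ω = t} f := by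
    intro j t f; funext ω
    by_cases hc : S j ω = t <;> simp [Set.indicator_apply, Set.mem_setOf_eq, hc]
  have htermMem : ∀ (j : Fin M)
      (T : {x // x ∈ Finset.powersetCard k (Finset.univ : Finset (Fin n))}),
      MemLp (fun ω => (if S j ω = ↑T then (1:ℝ) else 0)
        * auxPsi k h ↑T (fun i => X i ω)) 2 ℙ := by
    intro j T
    rw [htermEq j ↑T _]
    exact (hGL2 _ (hTcard T)).indicator (hAmeas j ↑T)
  have htermInt : ∀ (j : Fin M)
      (T : {x // x ∈ Finset.powersetCard k (Finset.univ : Finset (Fin n))}),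
      Integrable (fun ω => (if S j ω = ↑T then (1:ℝ) else 0)
        * auxPsi k h ↑T (fun i => X i ω)) ℙ :=
    fun j T => (htermMem j T).integrable one_le_two
  have htermSqInt : ∀ (j : Fin M)
      (T : {x // x ∈ Finset.powersetCard k (Finset.univ : Finset (Fin n))}),
      Integrable (fun ω => (if S j ω = ↑T then (1:ℝ) else 0)
        * (auxPsi k h ↑T (fun i => X i ω)) ^ 2) ℙ := by
    intro j T
    rw [htermEq j ↑T _]
    exact (hGsqint _ (hTcard T)).indicator (hAmeas j ↑T)
  have hYMem : ∀ j : Fin M,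
      MemLp (fun ω => auxPsi k h (S j ω) (fun i => X i ω)) 2 ℙ := by
    intro j
    rw [show (fun ω => auxPsi k h (S j ω) (fun i => X i ω))
      = fun ω => ∑ T ∈ (Finset.powersetCard k (Finset.univ : Finset (Fin n))).attach,
        (if S j ω = ↑T then (1:ℝ) else 0) * auxPsi k h ↑T (fun i => X i ω)
      from funext (hYexp j)]
    exact memLp_finset_sum _ fun T _ => htermMem j T
  have hYint : ∀ j : Fin M,
      Integrable (fun ω => auxPsi k h (S j ω) (fun i => X i ω)) ℙ :=
    fun j => (hYMem j).integrable one_le_two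
  -- first moments
  have hEY : ∀ j : Fin M, ∫ ω, auxPsi k h (S j ω) (fun i => X i ω) = m1 := by
    intro j
    simp only [hYexp j]
    rw [integral_finset_sum _ (fun T _ => htermInt j T)]
    rw [Finset.sum_congr rfl (fun T _ => by
      have hfac := hfacG j ↑T (auxPsi k h ↑T) (auxPsi_measurable k hmeas T.1)
        (hGint _ (hTcard T))
      rw [hfac, hEind j ↑T (hTcard T), hEG1 _ (hTcard T)])]
    rw [Finset.sum_const, hcardT, nsmul_eq_mul]
    field_simp
  have hEYsq : ∀ j : Fin M, ∫ ω, (auxPsi k h (S j ω) (fun i => X i ω)) ^ 2 = m2 := by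
    intro j
    simp only [hYsqexp j]
    rw [integral_finset_sum _ (fun T _ => htermSqInt j T)]
    rw [Finset.sum_congr rfl (fun T _ => by
      have hfac : ∫ ω, (if S j ω = ↑T then (1:ℝ) else 0)
            * (auxPsi k h ↑T (fun i => X i ω)) ^ 2
          = (∫ ω, (if S j ω = ↑T then (1:ℝ) else 0))
            * ∫ ω, (auxPsi k h ↑T (fun i => X i ω)) ^ 2 :=
        hfacG j ↑T (fun v => (auxPsi k h ↑T v) ^ 2)
          ((auxPsi_measurable k hmeas T.1).pow_const 2) (hGsqint _ (hTcard T))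
      rw [hfac, hEind j ↑T (hTcard T), hEG2 _ (hTcard T)])]
    rw [Finset.sum_const, hcardT, nsmul_eq_mul]
    field_simp
  -- second moments, cross terms
  have hGGint : ∀ (T T' : {x // x ∈ Finset.powersetCard k (Finset.univ : Finset (Fin n))}),
      Integrable (fun ω => auxPsi k h ↑T (fun i => X i ω)
        * auxPsi k h ↑T' (fun i => X i ω)) ℙ :=
    fun T T' => aux_integrable_mul (hGL2 _ (hTcard T)) (hGL2 _ (hTcard T'))
  set Q : ℝ := ∑ T ∈ (Finset.powersetCard k (Finset.univ : Finset (Fin n))).attach,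
      ∑ T' ∈ (Finset.powersetCard k (Finset.univ : Finset (Fin n))).attach,
        ∫ ω, auxPsi k h ↑T (fun i => X i ω) * auxPsi k h ↑T' (fun i => X i ω) with hQdef
  have hEU2 : ∫ ω, (U ω) ^ 2 = ((n.choose k : ℝ)⁻¹) ^ 2 * Q := by
    have hU2eq : ∀ ω, (U ω) ^ 2 = ((n.choose k : ℝ)⁻¹) ^ 2 *
        ∑ T ∈ (Finset.powersetCard k (Finset.univ : Finset (Fin n))).attach,
          ∑ T' ∈ (Finset.powersetCard k (Finset.univ : Finset (Fin n))).attach,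
            auxPsi k h ↑T (fun i => X i ω) * auxPsi k h ↑T' (fun i => X i ω) := by
      intro ω
      rw [hUeq ω, mul_pow, sq
        (∑ T ∈ (Finset.powersetCard k (Finset.univ : Finset (Fin n))).attach,
          auxPsi k h ↑T (fun i => X i ω)), Finset.sum_mul_sum]
    simp only [hU2eq]
    rw [integral_const_mul, hQdef,
      integral_finset_sum _ (fun T _ => integrable_finset_sum _ fun T' _ => hGGint T T')]
    congr 1
    exact Finset.sum_congr rfl fun T _ =>
      integral_finset_sum _ fun T' _ => hGGint T T'
  have hterm2Int : ∀ (j j' : Fin M)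
      (T T' : {x // x ∈ Finset.powersetCard k (Finset.univ : Finset (Fin n))}),
      Integrable (fun ω =>
        ((if S j ω = ↑T then (1:ℝ) else 0) * (if S j' ω = ↑T' then (1:ℝ) else 0))
          * (auxPsi k h ↑T (fun i => X i ω) * auxPsi k h ↑T' (fun i => X i ω))) ℙ := by
    intro j j' T T'
    rw [show (fun ω =>
        ((if S j ω = ↑T then (1:ℝ) else 0) * (if S j' ω = ↑T' then (1:ℝ) else 0))
          * (auxPsi k h ↑T (fun i => X i ω) * auxPsi k h ↑T' (fun i => X i ω)))
      = Set.indicator ({ω | S j ω = ↑T} ∩ {ω | S j' ω = ↑T'})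
          (fun ω => auxPsi k h ↑T (fun i => X i ω) * auxPsi k h ↑T' (fun i => X i ω)) by
        funext ω
        by_cases h1 : S j ω = ↑T <;> by_cases h2 : S j' ω = ↑T' <;>
          simp [Set.indicator_apply, Set.mem_setOf_eq, h1, h2]]
    exact (hGGint T T').indicator ((hAmeas j ↑T).inter (hAmeas j' ↑T'))
  have hEYpair : ∀ (j j' : Fin M), j ≠ j' →
      ∫ ω, auxPsi k h (S j ω) (fun i => X i ω) * auxPsi k h (S j' ω) (fun i => X i ω)
        = ((n.choose k : ℝ)⁻¹) ^ 2 * Q := by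
    intro j j' hjj'
    have hYYeq : ∀ ω,
        auxPsi k h (S j ω) (fun i => X i ω) * auxPsi k h (S j' ω) (fun i => X i ω)
        = ∑ T ∈ (Finset.powersetCard k (Finset.univ : Finset (Fin n))).attach,
          ∑ T' ∈ (Finset.powersetCard k (Finset.univ : Finset (Fin n))).attach,
            ((if S j ω = ↑T then (1:ℝ) else 0) * (if S j' ω = ↑T' then (1:ℝ) else 0))
              * (auxPsi k h ↑T (fun i => X i ω) * auxPsi k h ↑T' (fun i => X i ω)) := by
      intro ω
      rw [hYexp j ω, hYexp j' ω, Finset.sum_mul_sum]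
      exact Finset.sum_congr rfl fun T _ => Finset.sum_congr rfl fun T' _ => by ring
    simp only [hYYeq]
    rw [integral_finset_sum _ (fun T _ => integrable_finset_sum _ fun T' _ =>
      hterm2Int j j' T T')]
    rw [Finset.sum_congr rfl (fun T _ => integral_finset_sum _ fun T' _ =>
      hterm2Int j j' T T')]
    rw [Finset.sum_congr rfl (fun T _ => Finset.sum_congr rfl (fun T' _ => by
      have hfac : ∫ ω,
            ((if S j ω = ↑T then (1:ℝ) else 0) * (if S j' ω = ↑T' then (1:ℝ) else 0))
              * (auxPsi k h ↑T (fun i => X i ω) * auxPsi k h ↑T' (fun i => X i ω))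
          = (∫ ω, (if S j ω = ↑T then (1:ℝ) else 0) * (if S j' ω = ↑T' then (1:ℝ) else 0))
              * ∫ ω, auxPsi k h ↑T (fun i => X i ω) * auxPsi k h ↑T' (fun i => X i ω) :=
        hfacPair j j' ↑T ↑T' (fun v => auxPsi k h ↑T v * auxPsi k h ↑T' v)
          ((auxPsi_measurable k hmeas T.1).mul (auxPsi_measurable k hmeas T'.1))
          (hGGint T T')
      rw [hfac, hEpair j j' hjj' ↑T ↑T' (hTcard T) (hTcard T')]))]
    rw [hQdef, Finset.mul_sum]
    refine Finset.sum_congr rfl fun T _ => ?_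
    rw [Finset.mul_sum]
    exact Finset.sum_congr rfl fun T' _ => by ring
  -- MemLp of U and θhat
  have hθMem : MemLp θhat 2 ℙ := by
    rw [show θhat = fun ω => (M : ℝ)⁻¹ * ∑ j : Fin M, auxPsi k h (S j ω) (fun i => X i ω)
      from funext hθeq]
    exact (memLp_finset_sum _ fun j _ => hYMem j).const_mul _
  have hUMem : MemLp U 2 ℙ := by
    rw [show U = fun ω => (n.choose k : ℝ)⁻¹ *
        ∑ T ∈ (Finset.powersetCard k (Finset.univ : Finset (Fin n))).attach,
          auxPsi k h ↑T (fun i => X i ω) from funext hUeq]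
    exact (memLp_finset_sum _ fun T _ => hGL2 _ (hTcard T)).const_mul _
  -- first moments of U and θhat
  have hEθ : ∫ ω, θhat ω = m1 := by
    simp only [hθeq]
    rw [integral_const_mul, integral_finset_sum _ fun j _ => hYint j,
      Finset.sum_congr rfl (fun j _ => hEY j), Finset.sum_const,
      Finset.card_univ, Fintype.card_fin, nsmul_eq_mul]
    field_simp
  have hEU : ∫ ω, U ω = m1 := by
    simp only [hUeq]
    rw [integral_const_mul, integral_finset_sum _ fun T _ => hGint _ (hTcard T),
      Finset.sum_congr rfl (fun T _ => hEG1 _ (hTcard T)), Finset.sum_const, hcardT,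
      nsmul_eq_mul]
    field_simp
  -- second moment of θhat
  have hYYint : ∀ j j' : Fin M, Integrable (fun ω =>
      auxPsi k h (S j ω) (fun i => X i ω) * auxPsi k h (S j' ω) (fun i => X i ω)) ℙ :=
    fun j j' => aux_integrable_mul (hYMem j) (hYMem j')
  have hEYdiag : ∀ j : Fin M, ∫ ω,
      auxPsi k h (S j ω) (fun i => X i ω) * auxPsi k h (S j ω) (fun i => X i ω) = m2 := by
    intro j
    rw [show (fun ω => auxPsi k h (S j ω) (fun i => X i ω)
        * auxPsi k h (S j ω) (fun i => X i ω))
      = fun ω => (auxPsi k h (S j ω) (fun i => X i ω)) ^ 2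
      from funext fun ω => (pow_two _).symm]
    exact hEYsq j
  have hrow : ∀ j : Fin M,
      (∑ j' : Fin M, ∫ ω, auxPsi k h (S j ω) (fun i => X i ω)
          * auxPsi k h (S j' ω) (fun i => X i ω))
        = m2 + ((M : ℝ) - 1) * (((n.choose k : ℝ)⁻¹) ^ 2 * Q) := by
    intro j
    rw [← Finset.add_sum_erase _ _ (Finset.mem_univ j), hEYdiag j]
    congr 1
    rw [Finset.sum_congr rfl (fun j' hj' =>
      hEYpair j j' (Finset.ne_of_mem_erase hj').symm)]
    rw [Finset.sum_const, Finset.card_erase_of_mem (Finset.mem_univ j),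
      Finset.card_univ, Fintype.card_fin, nsmul_eq_mul, Nat.cast_sub hM, Nat.cast_one]
  have hEθsq : ∫ ω, (θhat ω) ^ 2
      = ((M : ℝ)⁻¹) ^ 2 * ((M : ℝ)
          * (m2 + ((M : ℝ) - 1) * (((n.choose k : ℝ)⁻¹) ^ 2 * Q))) := by
    have hθsqeq : ∀ ω, (θhat ω) ^ 2 = ((M : ℝ)⁻¹) ^ 2 *
        ∑ j : Fin M, ∑ j' : Fin M,
          auxPsi k h (S j ω) (fun i => X i ω) * auxPsi k h (S j' ω) (fun i => X i ω) := by
      intro ω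
      rw [hθeq ω, mul_pow, pow_two (∑ j : Fin M, auxPsi k h (S j ω) (fun i => X i ω)),
        Finset.sum_mul_sum]
    simp only [hθsqeq]
    rw [integral_const_mul,
      integral_finset_sum _ (fun j _ => integrable_finset_sum _ fun j' _ => hYYint j j'),
      Finset.sum_congr rfl (fun j _ => integral_finset_sum _ fun j' _ => hYYint j j'),
      Finset.sum_congr rfl (fun j _ => hrow j), Finset.sum_const,
      Finset.card_univ, Fintype.card_fin, nsmul_eq_mul]
  -- conclusion
  have hζ : ζk = m2 - m1 ^ 2 := by
    rw [hζk, variance_eq_sub hL2]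
    simp only [Pi.pow_apply]
    rfl
  rw [variance_eq_sub hθMem, variance_eq_sub hUMem]
  simp only [Pi.pow_apply]
  rw [hEθsq, hEθ, hEU2, hEU, hζ]
  field_simp
  ring
end

section
/- Let X = (X_1,…,X_n) and X' = (X'_1,…,X'_n) be two elements of 𝒳^n that agree in all coordinates except possibly i*. Suppose M_i > 0 and M_i/M ≤ 2k/n for all i, and M_{ij}/M_i ≤ 2k/n for all i ≠ j. Then: (a) |A_n(X) − A_n(X')| ≤ 2kC/n; (b) for every i ≠ i*, |ĥ_X(i) − ĥ_{X'}(i)| ≤ 2kC/n; and (c) |L_X − L_{X'}| ≤ 1. -/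
open Finset

/-- Deterministic sensitivity bounds for the reweighting scheme:
for adjacent datasets `X, X'` (differing only at `i*`), the empirical mean `A_n`,
the local Hájek projections at indices `i ≠ i*`, and the threshold level `L` each
have small sensitivity. -/
theorem local_hajek_sensitivity
    {𝒳 : Type*} {n k M : ℕ} (hk : 1 ≤ k) (hkn : k ≤ n) (hM : 1 ≤ M)
    (h : (Fin k → 𝒳) → ℝ)
    (hsymm : ∀ (σ : Equiv.Perm (Fin k)) (y : Fin k → 𝒳), h (y ∘ σ) = h y)
    (C : ℝ) (hC : 0 < C)
    (hrange : ∀ y y' : Fin k → 𝒳, h y - h y' ≤ C)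
    (𝒮 : Fin M → Finset (Fin n)) (hcard : ∀ j, (𝒮 j).card = k)
    (Mi : Fin n → ℕ)
    (hMi : ∀ i, Mi i = ((Finset.univ : Finset (Fin M)).filter (fun j => i ∈ 𝒮 j)).card)
    (hMipos : ∀ i, 0 < Mi i)
    (hMiM : ∀ i, (Mi i : ℝ) / M ≤ 2 * k / n)
    (hMij : ∀ i i' : Fin n, i ≠ i' →
      ((((Finset.univ : Finset (Fin M)).filter (fun j => i ∈ 𝒮 j ∧ i' ∈ 𝒮 j)).card : ℝ)
          / Mi i ≤ 2 * k / n))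
    (A : (Fin n → 𝒳) → ℝ)
    (hA : ∀ x, A x = (M : ℝ)⁻¹ *
      ∑ j : Fin M, h (fun i => x (↑((𝒮 j).orderIsoOfFin (hcard j) i))))
    (Hhat : (Fin n → 𝒳) → Fin n → ℝ)
    (hHhat : ∀ x i, Hhat x i = (Mi i : ℝ)⁻¹ *
      ∑ j ∈ (Finset.univ : Finset (Fin M)).filter (fun j => i ∈ 𝒮 j),
        h (fun l => x (↑((𝒮 j).orderIsoOfFin (hcard j) l))))
    (ξ : ℝ) (hξ : 0 ≤ ξ)
    (Xd X' : Fin n → 𝒳) (istar : Fin n)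
    (hagree : ∀ i, i ≠ istar → Xd i = X' i)
    (L L' : ℕ)
    (hL : IsLeast {t : ℕ | 1 ≤ t ∧ t ≤ n ∧
      (((Finset.univ : Finset (Fin n)).filter
        (fun i => ξ + 6 * k * C * t / n < |Hhat Xd i - A Xd|)).card ≤ t)} L)
    (hL' : IsLeast {t : ℕ | 1 ≤ t ∧ t ≤ n ∧
      (((Finset.univ : Finset (Fin n)).filter
        (fun i => ξ + 6 * k * C * t / n < |Hhat X' i - A X'|)).card ≤ t)} L') :
    |A Xd - A X'| ≤ 2 * k * C / n ∧
      (∀ i, i ≠ istar → |Hhat Xd i - Hhat X' i| ≤ 2 * k * C / n) ∧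
      |(L : ℤ) - (L' : ℤ)| ≤ 1 := by
  have hn1 : 1 ≤ n := le_trans hk hkn
  have hn0 : (0:ℝ) < n := by exact_mod_cast hn1
  have hM0 : (0:ℝ) < M := by exact_mod_cast hM
  set g : (Fin n → 𝒳) → Fin M → ℝ :=
    fun x j => h (fun l => x (↑((𝒮 j).orderIsoOfFin (hcard j) l))) with hg
  have hterm0 : ∀ j, istar ∉ 𝒮 j → g Xd j = g X' j := by
    intro j hj
    simp only [hg]
    congr 1
    funext l
    apply hagree
    intro heq
    exact hj (heq ▸ ((𝒮 j).orderIsoOfFin (hcard j) l).2)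
  have htermC : ∀ j, |g Xd j - g X' j| ≤ C := by
    intro j
    rw [abs_sub_le_iff]
    exact ⟨hrange _ _, hrange _ _⟩
  have hkey : ∀ F : Finset (Fin M),
      |∑ j ∈ F, (g Xd j - g X' j)| ≤
        ((F.filter (fun j => istar ∈ 𝒮 j)).card : ℝ) * C := by
    intro F
    have h1 : ∑ j ∈ F, (g Xd j - g X' j)
        = ∑ j ∈ F.filter (fun j => istar ∈ 𝒮 j), (g Xd j - g X' j) := by
      rw [eq_comm]
      apply Finset.sum_subset (Finset.filter_subset _ _)
      intro j hjF hj
      rw [Finset.mem_filter] at hj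
      have := hterm0 j (fun hh => hj ⟨hjF, hh⟩)
      simp [this]
    rw [h1]
    calc |∑ j ∈ F.filter (fun j => istar ∈ 𝒮 j), (g Xd j - g X' j)|
        ≤ ∑ j ∈ F.filter (fun j => istar ∈ 𝒮 j), |g Xd j - g X' j| :=
          Finset.abs_sum_le_sum_abs _ _
      _ ≤ ((F.filter (fun j => istar ∈ 𝒮 j)).card : ℝ) * C := by
          rw [← nsmul_eq_mul]
          exact Finset.sum_le_card_nsmul _ _ C (fun j _ => htermC j)
  -- Part (a)
  have hApart : |A Xd - A X'| ≤ 2 * k * C / n := by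
    have e : A Xd - A X' = (M : ℝ)⁻¹ * ∑ j : Fin M, (g Xd j - g X' j) := by
      rw [hA Xd, hA X', Finset.sum_sub_distrib, mul_sub]
    rw [e, abs_mul, abs_inv, abs_of_pos hM0]
    have hb := hkey Finset.univ
    have hcardeq : ((Finset.univ.filter (fun j => istar ∈ 𝒮 j)).card : ℝ)
        = (Mi istar : ℝ) := by exact_mod_cast congrArg Nat.cast (hMi istar).symm
    rw [hcardeq] at hb
    calc (M:ℝ)⁻¹ * |∑ j : Fin M, (g Xd j - g X' j)|
        ≤ (M:ℝ)⁻¹ * ((Mi istar : ℝ) * C) := by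
          apply mul_le_mul_of_nonneg_left hb (by positivity)
      _ = ((Mi istar : ℝ) / M) * C := by ring
      _ ≤ (2 * k / n) * C := mul_le_mul_of_nonneg_right (hMiM istar) hC.le
      _ = 2 * k * C / n := by ring
  -- Part (b)
  have hHpart : ∀ i, i ≠ istar → |Hhat Xd i - Hhat X' i| ≤ 2 * k * C / n := by
    intro i hi
    have hMi0 : (0:ℝ) < (Mi i : ℝ) := by exact_mod_cast hMipos i
    have e : Hhat Xd i - Hhat X' i
        = (Mi i : ℝ)⁻¹ * ∑ j ∈ Finset.univ.filter (fun j => i ∈ 𝒮 j),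
            (g Xd j - g X' j) := by
      rw [hHhat Xd i, hHhat X' i, Finset.sum_sub_distrib, mul_sub]
    rw [e, abs_mul, abs_inv, abs_of_pos hMi0]
    have hb := hkey (Finset.univ.filter (fun j => i ∈ 𝒮 j))
    rw [Finset.filter_filter] at hb
    have hij := hMij i istar hi
    calc (Mi i:ℝ)⁻¹ * |∑ j ∈ Finset.univ.filter (fun j => i ∈ 𝒮 j), (g Xd j - g X' j)|
        ≤ (Mi i:ℝ)⁻¹ * (((Finset.univ.filter (fun j => i ∈ 𝒮 j ∧ istar ∈ 𝒮 j)).card : ℝ) * C) := by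
          apply mul_le_mul_of_nonneg_left hb (by positivity)
      _ = (((Finset.univ.filter (fun j => i ∈ 𝒮 j ∧ istar ∈ 𝒮 j)).card : ℝ) / Mi i) * C := by
          ring
      _ ≤ (2 * k / n) * C := mul_le_mul_of_nonneg_right hij hC.le
      _ = 2 * k * C / n := by ring
  -- Part (c)
  refine ⟨hApart, hHpart, ?_⟩
  have hstep : ∀ (x y : Fin n → 𝒳), |A x - A y| ≤ 2 * k * C / n →
      (∀ i, i ≠ istar → |Hhat x i - Hhat y i| ≤ 2 * k * C / n) → ∀ t : ℕ,
      (Finset.univ.filter (fun i => ξ + 6 * k * C * ((t+1 : ℕ) : ℝ) / n < |Hhat x i - A x|))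
        ⊆ insert istar
          (Finset.univ.filter (fun i => ξ + 6 * k * C * (t : ℝ) / n < |Hhat y i - A y|)) := by
    intro x y hAxy hHxy t i hi
    rw [Finset.mem_filter] at hi
    by_cases hii : i = istar
    · subst hii; exact Finset.mem_insert_self _ _
    · apply Finset.mem_insert_of_mem
      rw [Finset.mem_filter]
      refine ⟨Finset.mem_univ _, ?_⟩
      have tri : |Hhat x i - A x| ≤ |Hhat x i - Hhat y i| + |Hhat y i - A y| + |A y - A x| := by
        have e : Hhat x i - A x = (Hhat x i - Hhat y i) + (Hhat y i - A y) + (A y - A x) := by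
          ring
        rw [e]
        exact (abs_add_le _ _).trans (add_le_add_left (abs_add_le _ _) _)
      have hAyx : |A y - A x| ≤ 2 * k * C / n := by rwa [abs_sub_comm]
      have hHi := hHxy i hii
      have hcast : ((t+1 : ℕ) : ℝ) = (t : ℝ) + 1 := by push_cast; ring
      have hlt := hi.2
      rw [hcast] at hlt
      have e2 : 6 * (k:ℝ) * C * ((t:ℝ) + 1) / n = 6 * k * C * (t:ℝ) / n + 6 * k * C / n := by
        ring
      have hpos : (0:ℝ) ≤ 2 * k * C / n := by positivity
      have e3 : 6 * (k:ℝ) * C / n = 3 * (2 * k * C / n) := by ring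
      linarith
  -- L ≤ L' + 1
  have hle : ∀ (x y : Fin n → 𝒳) (Lx Ly : ℕ),
      |A x - A y| ≤ 2 * k * C / n →
      (∀ i, i ≠ istar → |Hhat x i - Hhat y i| ≤ 2 * k * C / n) →
      IsLeast {t : ℕ | 1 ≤ t ∧ t ≤ n ∧
        (((Finset.univ : Finset (Fin n)).filter
          (fun i => ξ + 6 * k * C * t / n < |Hhat x i - A x|)).card ≤ t)} Lx →
      IsLeast {t : ℕ | 1 ≤ t ∧ t ≤ n ∧
        (((Finset.univ : Finset (Fin n)).filter
          (fun i => ξ + 6 * k * C * t / n < |Hhat y i - A y|)).card ≤ t)} Ly →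
      Lx ≤ Ly + 1 := by
    intro x y Lx Ly hAxy hHxy hLx hLy
    by_cases hcase : Ly + 1 ≤ n
    · apply hLx.2
      refine ⟨by omega, hcase, ?_⟩
      calc (Finset.univ.filter
              (fun i => ξ + 6 * k * C * ((Ly+1 : ℕ) : ℝ) / n < |Hhat x i - A x|)).card
          ≤ (insert istar (Finset.univ.filter
              (fun i => ξ + 6 * k * C * (Ly : ℝ) / n < |Hhat y i - A y|))).card :=
            Finset.card_le_card (hstep x y hAxy hHxy Ly)
        _ ≤ (Finset.univ.filter
              (fun i => ξ + 6 * k * C * (Ly : ℝ) / n < |Hhat y i - A y|)).card + 1 :=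
            Finset.card_insert_le _ _
        _ ≤ Ly + 1 := by
            have := hLy.1.2.2
            omega
    · have h1 : Lx ≤ n := hLx.1.2.1
      omega
  have h1 : L ≤ L' + 1 := hle Xd X' L L' hApart hHpart hL hL'
  have h2 : L' ≤ L + 1 := by
    apply hle X' Xd L' L
    · rwa [abs_sub_comm]
    · intro i hi; rw [abs_sub_comm]; exact hHpart i hi
    · exact hL'
    · exact hL
  rw [abs_le]
  constructor <;> [skip; skip] <;> omega
end

section
/- For all natural numbers n, k, b with 1 ≤ k ≤ n and 0 ≤ b ≤ n, one has Σ_{a=2}^{k} (a−1)·binom(b,a)·binom(n−b,k−a) ≤ (k²b²/n²)·binom(n,k). -/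
open Finset

lemma aux_id (b a : ℕ) (ha : 2 ≤ a) :
    a * (a - 1) * b.choose a = b * (b - 1) * (b - 2).choose (a - 2) := by
  obtain ⟨a', rfl⟩ : ∃ a', a = a' + 2 := ⟨a - 2, by omega⟩
  match b with
  | 0 => simp [Nat.choose_eq_zero_of_lt]
  | 1 => simp [Nat.choose_eq_zero_of_lt (by omega : (1:ℕ) < a' + 2)]
  | (b'' + 2) =>
    have h1 := Nat.add_one_mul_choose_eq (b'' + 1) (a' + 1)
    have h2 := Nat.add_one_mul_choose_eq b'' a'
    have e1 : a' + 2 - 1 = a' + 1 := rfl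
    have e2 : a' + 2 - 2 = a' := rfl
    have e3 : b'' + 2 - 1 = b'' + 1 := rfl
    have e4 : b'' + 2 - 2 = b'' := rfl
    rw [e1, e2, e3, e4]
    zify at h1 h2 ⊢
    linear_combination (-(a':ℤ)-1) * h1 - ((b'':ℤ)+2) * h2

lemma sum_le_key (n k b : ℕ) (hk2 : 2 ≤ k) (hb2 : 2 ≤ b) (hb : b ≤ n) :
    (∑ a ∈ Finset.Icc 2 k, (a - 1) * b.choose a * (n - b).choose (k - a))
      ≤ b * (b - 1) * (n - 2).choose (k - 2) := by
  calc (∑ a ∈ Finset.Icc 2 k, (a - 1) * b.choose a * (n - b).choose (k - a))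
      ≤ ∑ a ∈ Finset.Icc 2 k, a * (a - 1) * b.choose a * (n - b).choose (k - a) := by
        apply Finset.sum_le_sum
        intro a ha
        have ha2 : 2 ≤ a := (Finset.mem_Icc.mp ha).1
        have h : a - 1 ≤ a * (a - 1) := Nat.le_mul_of_pos_left _ (by omega)
        exact Nat.mul_le_mul_right _ (Nat.mul_le_mul_right _ h)
    _ = ∑ a ∈ Finset.Icc 2 k, b * (b - 1) * ((b - 2).choose (a - 2) * (n - b).choose (k - a)) := by
        apply Finset.sum_congr rfl
        intro a ha
        have ha2 : 2 ≤ a := (Finset.mem_Icc.mp ha).1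
        rw [aux_id b a ha2]; ring
    _ = b * (b - 1) * ∑ a ∈ Finset.Icc 2 k, (b - 2).choose (a - 2) * (n - b).choose (k - a) :=
        (Finset.mul_sum _ _ _).symm
    _ = b * (b - 1) * (n - 2).choose (k - 2) := by
        congr 1
        have hIccIco : Finset.Icc 2 k = Finset.Ico 2 (k + 1) := by
          rw [Finset.Ico_add_one_right_eq_Icc]
        rw [hIccIco, Finset.sum_Ico_eq_sum_range]
        have hnn : n - 2 = (b - 2) + (n - b) := by omega
        rw [hnn, Nat.add_choose_eq, Finset.Nat.sum_antidiagonal_eq_sum_range_succ_mk]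
        have hrange : k + 1 - 2 = k - 2 + 1 := by omega
        rw [hrange]
        apply Finset.sum_congr rfl
        intro i hi
        have : 2 + i - 2 = i := by omega
        rw [this, Nat.sub_add_eq]

/-- For `1 ≤ k ≤ n` and `b ≤ n`,
`Σ_{a=2}^{k} (a−1)·C(b,a)·C(n−b,k−a) ≤ (k²b²/n²)·C(n,k)`. -/
theorem overcount_bound (n k b : ℕ) (hk : 1 ≤ k) (hkn : k ≤ n) (hb : b ≤ n) :
    ((∑ a ∈ Finset.Icc 2 k, (a - 1) * b.choose a * (n - b).choose (k - a) : ℕ) : ℝ) ≤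
      (k : ℝ) ^ 2 * (b : ℝ) ^ 2 / (n : ℝ) ^ 2 * (n.choose k : ℝ) := by
  rcases Nat.lt_or_ge k 2 with hk2 | hk2
  · have : k = 1 := by omega
    subst this
    simp only [show Finset.Icc 2 1 = ∅ from rfl, Finset.sum_empty, Nat.cast_zero]
    positivity
  rcases Nat.lt_or_ge b 2 with hb2 | hb2
  · have hS : (∑ a ∈ Finset.Icc 2 k, (a - 1) * b.choose a * (n - b).choose (k - a)) = 0 := by
      apply Finset.sum_eq_zero
      intro a ha
      have := (Finset.mem_Icc.mp ha).1
      rw [Nat.choose_eq_zero_of_lt (by omega)]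
      ring
    rw [hS]
    simp only [Nat.cast_zero]
    positivity
  · have hn2 : 2 ≤ n := le_trans hk2 hkn
    have hS := sum_le_key n k b hk2 hb2 hb
    have hid := aux_id n k hk2
    set S : ℕ := ∑ a ∈ Finset.Icc 2 k, (a - 1) * b.choose a * (n - b).choose (k - a) with hSdef
    set T : ℝ := ((n - 2).choose (k - 2) : ℝ) with hTdef
    set C : ℝ := (n.choose k : ℝ) with hCdef
    have hS' : (S : ℝ) ≤ (b : ℝ) * ((b : ℝ) - 1) * T := by
      have := (Nat.cast_le (α := ℝ)).mpr hS
      push_cast [Nat.cast_sub (by omega : 1 ≤ b)] at this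
      convert this using 2
    have hid' : (k : ℝ) * ((k : ℝ) - 1) * C = (n : ℝ) * ((n : ℝ) - 1) * T := by
      have : ((k * (k - 1) * n.choose k : ℕ) : ℝ) = ((n * (n - 1) * (n - 2).choose (k - 2) : ℕ) : ℝ) := by
        exact_mod_cast congrArg (Nat.cast (R := ℝ)) hid
      push_cast [Nat.cast_sub (by omega : 1 ≤ k), Nat.cast_sub (by omega : 1 ≤ n)] at this
      exact this
    have hn0 : (0 : ℝ) < (n : ℝ) ^ 2 := by positivity
    rw [div_mul_eq_mul_div, le_div_iff₀ hn0]
    have hk1 : (2 : ℝ) ≤ (k : ℝ) := by exact_mod_cast hk2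
    have hb1 : (2 : ℝ) ≤ (b : ℝ) := by exact_mod_cast hb2
    have hnR : (k : ℝ) ≤ (n : ℝ) := by exact_mod_cast hkn
    have hT0 : (0 : ℝ) ≤ T := by positivity
    have hkk : (0 : ℝ) < (k : ℝ) * ((k : ℝ) - 1) := by nlinarith
    have key : (k : ℝ) * ((k : ℝ) - 1) * ((S : ℝ) * (n : ℝ) ^ 2)
        ≤ (k : ℝ) * ((k : ℝ) - 1) * ((k : ℝ) ^ 2 * (b : ℝ) ^ 2 * C) := by
      have h3 : (n : ℝ) * ((k : ℝ) - 1) ≤ (k : ℝ) * ((n : ℝ) - 1) := by nlinarith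
      have h4 : (b : ℝ) - 1 ≤ (b : ℝ) := by linarith
      have h5 : ((b : ℝ) - 1) * ((n : ℝ) * ((k : ℝ) - 1)) ≤ (b : ℝ) * ((k : ℝ) * ((n : ℝ) - 1)) :=
        mul_le_mul h4 h3 (by nlinarith) (by positivity)
      have h6 := mul_le_mul_of_nonneg_left h5 (show (0 : ℝ) ≤ (b : ℝ) by positivity)
      calc (k : ℝ) * ((k : ℝ) - 1) * ((S : ℝ) * (n : ℝ) ^ 2)
          ≤ (k : ℝ) * ((k : ℝ) - 1) * (((b : ℝ) * ((b : ℝ) - 1) * T) * (n : ℝ) ^ 2) := by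
            apply mul_le_mul_of_nonneg_left _ (le_of_lt hkk)
            apply mul_le_mul_of_nonneg_right hS' (by positivity)
        _ = ((b : ℝ) * (((b : ℝ) - 1) * ((n : ℝ) * ((k : ℝ) - 1)))) * (((n : ℝ) * (k : ℝ)) * T) := by
            ring
        _ ≤ ((b : ℝ) * ((b : ℝ) * ((k : ℝ) * ((n : ℝ) - 1)))) * (((n : ℝ) * (k : ℝ)) * T) := by
            apply mul_le_mul_of_nonneg_right h6 (by positivity)
        _ = (k : ℝ) * ((k : ℝ) - 1) * ((k : ℝ) ^ 2 * (b : ℝ) ^ 2 * C) := by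
            linear_combination ((k : ℝ) ^ 2 * (b : ℝ) ^ 2) * hid'.symm
    exact le_of_mul_le_mul_left key hkk
end

section
/- Let 𝒳 be a measurable space, n ≥ 1, ε > 0, and let A be a Markov kernel assigning to each dataset D ∈ 𝒳^n a probability measure A(D) on ℝ, satisfying ε-differential privacy: for all D, D' ∈ 𝒳^n differing in exactly one coordinate and every measurable set S ⊆ ℝ, A(D)(S) ≤ e^{ε}·A(D')(S). Let D_0, D_1 ∈ 𝒳^n differ in at most m coordinates with m·ε ≤ 1, and let v_0, v_1 ∈ ℝ. Then max( ∫ |x − v_0| dA(D_0)(x), ∫ |x − v_1| dA(D_1)(x) ) ≥ |v_0 − v_1|/10. -/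
open MeasureTheory ProbabilityTheory
open scoped ENNReal

private lemma dp_chain
    {𝒳 : Type*} [MeasurableSpace 𝒳] {n : ℕ}
    (ε : ℝ)
    (A : Kernel (Fin n → 𝒳) ℝ)
    (hDP : ∀ D D' : Fin n → 𝒳, (∃ i₀ : Fin n, ∀ j, j ≠ i₀ → D j = D' j) →
      ∀ s : Set ℝ, MeasurableSet s → A D s ≤ ENNReal.ofReal (Real.exp ε) * A D' s)
    (s : Set ℝ) (hs : MeasurableSet s) :
    ∀ (js : Finset (Fin n)) (D D' : Fin n → 𝒳), (∀ i ∉ js, D i = D' i) →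
      A D s ≤ ENNReal.ofReal (Real.exp (js.card * ε)) * A D' s := by
  intro js
  induction js using Finset.induction_on with
  | empty =>
    intro D D' h
    have : D = D' := funext fun i => h i (Finset.notMem_empty i)
    simp [this]
  | @insert a js ha ih =>
    intro D D' h
    set Dm : Fin n → 𝒳 := Function.update D a (D' a) with hDm
    have h1 : A D s ≤ ENNReal.ofReal (Real.exp ε) * A Dm s := by
      apply hDP D Dm ⟨a, fun j hj => ?_⟩ s hs
      simp [hDm, Function.update_of_ne hj]
    have h2 : A Dm s ≤ ENNReal.ofReal (Real.exp (js.card * ε)) * A D' s := by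
      apply ih
      intro i hi
      by_cases hia : i = a
      · subst hia; simp [hDm]
      · rw [hDm, Function.update_of_ne hia]
        exact h i (by simp [hia, hi])
    calc A D s ≤ ENNReal.ofReal (Real.exp ε) * A Dm s := h1
      _ ≤ ENNReal.ofReal (Real.exp ε) *
          (ENNReal.ofReal (Real.exp (js.card * ε)) * A D' s) :=
            mul_le_mul_right h2 _
      _ = ENNReal.ofReal (Real.exp ((insert a js).card * ε)) * A D' s := by
          rw [← mul_assoc, ← ENNReal.ofReal_mul (Real.exp_pos _).le, ← Real.exp_add,
            Finset.card_insert_of_notMem ha]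
          push_cast
          ring_nf

/-- Two-point lower bound for differentially private estimation:
if `A` is an `ε`-DP Markov kernel and the datasets `D₀, D₁` differ in at most `m`
coordinates with `m·ε ≤ 1`, then for any targets `v₀, v₁`,
`max(E|A(D₀) − v₀|, E|A(D₁) − v₁|) ≥ |v₀ − v₁|/10`. -/
theorem dp_two_point_lower_bound
    {𝒳 : Type*} [MeasurableSpace 𝒳] {n : ℕ} (hn : 1 ≤ n)
    (ε : ℝ) (hε : 0 < ε)
    (A : Kernel (Fin n → 𝒳) ℝ) [IsMarkovKernel A]
    (hDP : ∀ D D' : Fin n → 𝒳, (∃ i₀ : Fin n, ∀ j, j ≠ i₀ → D j = D' j) →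
      ∀ s : Set ℝ, MeasurableSet s → A D s ≤ ENNReal.ofReal (Real.exp ε) * A D' s)
    (m : ℕ) (hm : (m : ℝ) * ε ≤ 1)
    (D₀ D₁ : Fin n → 𝒳)
    (hdiff : ∃ js : Finset (Fin n), js.card ≤ m ∧ ∀ i ∉ js, D₀ i = D₁ i)
    (v₀ v₁ : ℝ) :
    ENNReal.ofReal (|v₀ - v₁| / 10) ≤
      max (∫⁻ x, ENNReal.ofReal |x - v₀| ∂(A D₀))
        (∫⁻ x, ENNReal.ofReal |x - v₁| ∂(A D₁)) := by
  set Δ := |v₀ - v₁| with hΔ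
  rcases le_or_gt Δ 0 with hΔ0 | hΔ0
  · have : Δ / 10 ≤ 0 := by linarith
    simp [ENNReal.ofReal_eq_zero.mpr this]
  set S : Set ℝ := {x | |x - v₀| < Δ / 2} with hS
  have hSmeas : MeasurableSet S :=
    ((measurable_id.sub_const v₀).abs) measurableSet_Iio
  set μ₀ := A D₀ with hμ₀
  set μ₁ := A D₁ with hμ₁
  have hint₀ : ENNReal.ofReal (Δ / 2) * μ₀ Sᶜ ≤ ∫⁻ x, ENNReal.ofReal |x - v₀| ∂μ₀ := by
    calc ENNReal.ofReal (Δ / 2) * μ₀ Sᶜ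
        = ∫⁻ _ in Sᶜ, ENNReal.ofReal (Δ / 2) ∂μ₀ := by rw [setLIntegral_const]
      _ ≤ ∫⁻ x in Sᶜ, ENNReal.ofReal |x - v₀| ∂μ₀ := by
          apply setLIntegral_mono ((measurable_id.sub_const v₀).abs.ennreal_ofReal)
          intro x hx
          simp only [id_eq]
          exact ENNReal.ofReal_le_ofReal (not_lt.mp hx)
      _ ≤ ∫⁻ x, ENNReal.ofReal |x - v₀| ∂μ₀ := setLIntegral_le_lintegral _ _
  have hint₁ : ENNReal.ofReal (Δ / 2) * μ₁ S ≤ ∫⁻ x, ENNReal.ofReal |x - v₁| ∂μ₁ := by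
    calc ENNReal.ofReal (Δ / 2) * μ₁ S
        = ∫⁻ _ in S, ENNReal.ofReal (Δ / 2) ∂μ₁ := by rw [setLIntegral_const]
      _ ≤ ∫⁻ x in S, ENNReal.ofReal |x - v₁| ∂μ₁ := by
          apply setLIntegral_mono ((measurable_id.sub_const v₁).abs.ennreal_ofReal)
          intro x hx
          apply ENNReal.ofReal_le_ofReal
          simp only [id_eq]
          have h1 : |x - v₀| < Δ / 2 := hx
          have h2 : Δ ≤ |x - v₀| + |x - v₁| := by
            have he : v₀ - v₁ = -(x - v₀) + (x - v₁) := by ring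
            rw [hΔ, he]
            exact le_trans (abs_add_le _ _) (by rw [abs_neg])
          linarith
      _ ≤ ∫⁻ x, ENNReal.ofReal |x - v₁| ∂μ₁ := setLIntegral_le_lintegral _ _
  rcases le_or_gt (ENNReal.ofReal (1/5)) (μ₀ Sᶜ) with hc | hc
  · refine le_trans ?_ (le_max_left _ _)
    calc ENNReal.ofReal (Δ / 10)
        = ENNReal.ofReal (Δ / 2) * ENNReal.ofReal (1/5) := by
          rw [← ENNReal.ofReal_mul (by linarith)]; ring_nf
      _ ≤ ENNReal.ofReal (Δ / 2) * μ₀ Sᶜ := mul_le_mul_right hc _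
      _ ≤ _ := hint₀
  · -- μ₀ S ≥ 4/5
    have hμ₀S : ENNReal.ofReal (4/5) ≤ μ₀ S := by
      have hcompl : μ₀ Sᶜ = 1 - μ₀ S := prob_compl_eq_one_sub hSmeas
      have h1 : (1 : ℝ≥0∞) - μ₀ S ≤ ENNReal.ofReal (1/5) := hcompl ▸ hc.le
      have hsum : μ₀ S + μ₀ Sᶜ = 1 := by
        rw [measure_add_measure_compl hSmeas, measure_univ]
      have h2 : (1 : ℝ≥0∞) ≤ ENNReal.ofReal (1/5) + μ₀ S :=
        calc (1 : ℝ≥0∞) = μ₀ Sᶜ + μ₀ S := by rw [add_comm]; exact hsum.symm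
          _ ≤ ENNReal.ofReal (1/5) + μ₀ S := add_le_add_left hc.le _
      calc ENNReal.ofReal (4/5) = 1 - ENNReal.ofReal (1/5) := by
            rw [← ENNReal.ofReal_one, ← ENNReal.ofReal_sub _ (by norm_num)]
            norm_num
        _ ≤ μ₀ S := tsub_le_iff_left.mpr h2
    -- chain: μ₀ S ≤ e * μ₁ S ≤ 3 * μ₁ S
    obtain ⟨js, hcard, hagree⟩ := hdiff
    have hchain := dp_chain ε A hDP S hSmeas js D₀ D₁ hagree
    have hexp : Real.exp ((js.card : ℝ) * ε) ≤ 3 := by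
      have h1 : (js.card : ℝ) * ε ≤ 1 := by
        have : (js.card : ℝ) ≤ m := by exact_mod_cast hcard
        nlinarith
      calc Real.exp ((js.card : ℝ) * ε) ≤ Real.exp 1 := Real.exp_le_exp.mpr h1
        _ ≤ 3 := by
          have := Real.exp_one_lt_d9
          linarith
    have hμ₁S : ENNReal.ofReal (1/5) ≤ μ₁ S := by
      have h3 : ENNReal.ofReal (4/5) ≤ ENNReal.ofReal 3 * μ₁ S := by
        calc ENNReal.ofReal (4/5) ≤ μ₀ S := hμ₀S
          _ ≤ ENNReal.ofReal (Real.exp ((js.card : ℝ) * ε)) * μ₁ S := hchain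
          _ ≤ ENNReal.ofReal 3 * μ₁ S :=
              mul_le_mul_left (ENNReal.ofReal_le_ofReal hexp) _
      have h4 : ENNReal.ofReal (4/5) / ENNReal.ofReal 3 ≤ μ₁ S :=
        ENNReal.div_le_of_le_mul (by rwa [mul_comm] at h3)
      calc ENNReal.ofReal (1/5) ≤ ENNReal.ofReal ((4/5) / 3) :=
            ENNReal.ofReal_le_ofReal (by norm_num)
        _ = ENNReal.ofReal (4/5) / ENNReal.ofReal 3 :=
            ENNReal.ofReal_div_of_pos (by norm_num)
        _ ≤ μ₁ S := h4
    refine le_trans ?_ (le_max_right _ _)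
    calc ENNReal.ofReal (Δ / 10)
        = ENNReal.ofReal (Δ / 2) * ENNReal.ofReal (1/5) := by
          rw [← ENNReal.ofReal_mul (by linarith)]; ring_nf
      _ ≤ ENNReal.ofReal (Δ / 2) * μ₁ S := mul_le_mul_right hμ₁S _
      _ ≤ _ := hint₁
end

section
/- For all integers k ≥ 1, b ≥ k, and m ≥ 0, one has 1 − binom(b,k)/binom(b+m,k) ≥ k·m/(b + (k+1)·m). -/
open Finset

lemma descFac_ineq (m : ℕ) : ∀ k b : ℕ, k ≤ b →
    b.descFactorial k * (b + m) ^ k ≤ (b + m).descFactorial k * b ^ k := by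
  intro k
  induction k with
  | zero => simp
  | succ k ih =>
    intro b hb
    have hk : k ≤ b := Nat.le_of_succ_le hb
    rw [Nat.descFactorial_succ, Nat.descFactorial_succ, pow_succ, pow_succ]
    have h1 : (b - k) * (b + m) ≤ (b + m - k) * b := by
      zify [hk, show k ≤ b + m from by omega]
      nlinarith [mul_nonneg (Int.ofNat_nonneg k) (Int.ofNat_nonneg m)]
    calc (b - k) * b.descFactorial k * ((b + m) ^ k * (b + m))
        = ((b - k) * (b + m)) * (b.descFactorial k * (b + m) ^ k) := by ring
      _ ≤ ((b + m - k) * b) * ((b + m).descFactorial k * b ^ k) :=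
          Nat.mul_le_mul h1 (ih b hk)
      _ = (b + m - k) * (b + m).descFactorial k * (b ^ k * b) := by ring

lemma pow_ineq (b m : ℕ) : ∀ k : ℕ, b ^ k * (b + (k + 1) * m) ≤ (b + m) ^ (k + 1) := by
  intro k
  induction k with
  | zero => simp
  | succ k ih =>
    have h : (b + m) ^ (k + 2) = (b + m) ^ (k + 1) * (b + m) := by ring
    rw [h]
    calc b ^ (k + 1) * (b + (k + 1 + 1) * m)
        = b ^ k * (b * (b + (k + 1 + 1) * m)) := by ring
      _ ≤ b ^ k * ((b + (k + 1) * m) * (b + m)) := Nat.mul_le_mul_left _ (by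
            have : (b + (k + 1) * m) * (b + m) = b * (b + (k + 1 + 1) * m) + (k + 1) * m * m := by
              ring
            omega)
      _ = (b ^ k * (b + (k + 1) * m)) * (b + m) := by ring
      _ ≤ (b + m) ^ (k + 1) * (b + m) := Nat.mul_le_mul_right _ ih

lemma choose_key (k b m : ℕ) (hk : 1 ≤ k) (hb : k ≤ b) :
    b.choose k * (b + (k + 1) * m) ≤ (b + m) * (b + m).choose k := by
  have hbm : 0 < (b + m) ^ k := Nat.pow_pos (by omega)
  apply Nat.le_of_mul_le_mul_right _ hbm
  have h1 := descFac_ineq m k b hb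
  rw [Nat.descFactorial_eq_factorial_mul_choose, Nat.descFactorial_eq_factorial_mul_choose] at h1
  rw [mul_assoc, mul_assoc] at h1
  have h1' : b.choose k * (b + m) ^ k ≤ (b + m).choose k * b ^ k :=
    Nat.le_of_mul_le_mul_left h1 (Nat.factorial_pos k)
  have h2 := pow_ineq b m k
  calc b.choose k * (b + (k + 1) * m) * (b + m) ^ k
      = (b.choose k * (b + m) ^ k) * (b + (k + 1) * m) := by ring
    _ ≤ ((b + m).choose k * b ^ k) * (b + (k + 1) * m) := Nat.mul_le_mul_right _ h1'
    _ = (b + m).choose k * (b ^ k * (b + (k + 1) * m)) := by ring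
    _ ≤ (b + m).choose k * (b + m) ^ (k + 1) := Nat.mul_le_mul_left _ h2
    _ = (b + m) * (b + m).choose k * (b + m) ^ k := by ring

/-- For `k ≥ 1`, `b ≥ k`, and `m ≥ 0`,
`1 − C(b,k)/C(b+m,k) ≥ k·m/(b + (k+1)·m)`. -/
theorem choose_ratio_lower_bound (k b m : ℕ) (hk : 1 ≤ k) (hb : k ≤ b) :
    (k : ℝ) * (m : ℝ) / ((b : ℝ) + ((k : ℝ) + 1) * (m : ℝ)) ≤
      1 - (b.choose k : ℝ) / ((b + m).choose k : ℝ) := by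
  have hB : (0 : ℝ) < ((b + m).choose k : ℝ) := by
    exact_mod_cast Nat.choose_pos (by omega : k ≤ b + m)
  have hD : (0 : ℝ) < (b : ℝ) + ((k : ℝ) + 1) * (m : ℝ) := by
    have h1 : (1 : ℝ) ≤ (b : ℝ) := by exact_mod_cast (by omega : 1 ≤ b)
    positivity
  have key : (b.choose k : ℝ) * ((b : ℝ) + ((k : ℝ) + 1) * (m : ℝ)) ≤
      ((b : ℝ) + (m : ℝ)) * ((b + m).choose k : ℝ) := by
    have h := (Nat.cast_le (α := ℝ)).mpr (choose_key k b m hk hb)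
    push_cast at h
    linarith
  have h2 : (b.choose k : ℝ) / ((b + m).choose k : ℝ) ≤
      ((b : ℝ) + (m : ℝ)) / ((b : ℝ) + ((k : ℝ) + 1) * (m : ℝ)) := by
    rw [div_le_div_iff₀ hB hD]; linarith
  have h3 : ((b : ℝ) + (m : ℝ)) / ((b : ℝ) + ((k : ℝ) + 1) * (m : ℝ)) +
      (k : ℝ) * (m : ℝ) / ((b : ℝ) + ((k : ℝ) + 1) * (m : ℝ)) = 1 := by
    rw [← add_div, div_eq_one_iff_eq hD.ne']; ring
  linarith
end
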